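/- Let Γ be a group, Ω an algebraically closed field of characteristic zero, and let ρ, ρ' : Γ → GLₙ(Ω) be semisimple (completely reducible) representations. If tr ρ(γ) = tr ρ'(γ) for all γ ∈ Γ, then ρ and ρ' are conjugate by an element of GLₙ(Ω). -/

import Mathlib

open LinearMap Module
open scoped DirectSum

universe u v w

section Abstract

variable {k : Type u} [Field k] {A : Type v} [Ring A] [Algebra k A]

variable (k) in
/-- The action of `a : A` on an `A`-module as a `k`-linear endomorphism. -/
noncomputable def actL {M : Type w} [AddCommGroup M] [Module k M] [Module A M]
    [IsScalarTower k A M] (a : A) : M →ₗ[k] M where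
  toFun x := a • x
  map_add' := smul_add a
  map_smul' c x := by
    show a • c • x = c • a • x
    rw [← algebraMap_smul A c x, ← mul_smul, ← Algebra.commutes, mul_smul, algebraMap_smul]

@[simp] theorem actL_apply {M : Type w} [AddCommGroup M] [Module k M] [Module A M]
    [IsScalarTower k A M] (a : A) (x : M) : actL k a x = a • x := rfl

variable (k) in
/-- Trace of the action of `a`. -/
noncomputable def chi (M : Type w) [AddCommGroup M] [Module k M] [Module A M]
    [IsScalarTower k A M] (a : A) : k := LinearMap.trace k M (actL k a)

variable {M : Type w} {N : Type w} [AddCommGroup M] [Module k M] [Module A M]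
  [IsScalarTower k A M] [AddCommGroup N] [Module k N] [Module A N] [IsScalarTower k A N]

theorem chi_congr (e : M ≃ₗ[A] N) (a : A) : chi k (A := A) M a = chi k N a := by
  have : actL k (M := N) a = (e.restrictScalars k).conj (actL k (M := M) a) := by
    ext x
    simp [LinearEquiv.conj_apply, map_smul]
  rw [chi, chi, this, LinearMap.trace_conj']

instance submodule_finiteDimensional [FiniteDimensional k M] (p : Submodule A M) :
    FiniteDimensional k p :=
  FiniteDimensional.of_injective (p.subtype.restrictScalars k) Subtype.val_injective

theorem chi_prod [FiniteDimensional k M] [FiniteDimensional k N] (a : A) :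
    chi k (A := A) (M × N) a = chi k M a + chi k N a := by
  have : actL k (M := M × N) a = (actL k (M := M) a).prodMap (actL k (M := N) a) := by
    ext x <;> rfl
  rw [chi, this, LinearMap.trace_prodMap']; rfl

theorem chi_one [FiniteDimensional k M] : chi k (A := A) M 1 = (finrank k M : k) := by
  have : actL k (M := M) (1 : A) = LinearMap.id := by ext x; simp
  rw [chi, this, LinearMap.trace_id]

/-- Semisimplicity of a product. -/
theorem isSemisimple_prod [IsSemisimpleModule A M] [IsSemisimpleModule A N] :
    IsSemisimpleModule A (M × N) := by
  refine isSemisimpleModule_of_isSemisimpleModule_submodule' (p := fun b : Bool =>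
    if b then LinearMap.range (inl A M N) else LinearMap.range (inr A M N)) ?_ ?_
  · rintro (_ | _)
    · simpa using IsSemisimpleModule.congr (LinearEquiv.ofInjective (inr A M N) inr_injective).symm
    · simpa using IsSemisimpleModule.congr (LinearEquiv.ofInjective (inl A M N) inl_injective).symm
  · rw [← top_le_iff, ← LinearMap.sup_range_inl_inr (R := A) (M := M) (M₂ := N)]
    refine sup_le ?_ ?_
    · exact le_iSup_of_le true (by simp)
    · exact le_iSup_of_le false (by simp)

/-- Semisimplicity of finite powers. -/
theorem isSemisimple_pi {ι : Type*} [Fintype ι] [DecidableEq ι] [IsSemisimpleModule A M] :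
    IsSemisimpleModule A (ι → M) := by
  refine isSemisimpleModule_of_isSemisimpleModule_submodule' (p := fun i : ι =>
    LinearMap.range (LinearMap.single A (fun _ : ι => M) i)) ?_ ?_
  · intro i
    refine IsSemisimpleModule.congr (LinearEquiv.ofInjective _ ?_).symm
    show Function.Injective (LinearMap.single A (fun _ : ι => M) i)
    intro x y hxy
    simpa using congrFun hxy i
  · rw [eq_top_iff]
    intro x _
    have : x = ∑ i, LinearMap.single A (fun _ : ι => M) i (x i) := by
      simpa using (Finset.univ_sum_single x).symm
    rw [this]
    exact Submodule.sum_mem _ fun i _ => Submodule.mem_iSup_of_mem i (LinearMap.mem_range_self _ _)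

/-- Two `A`-linear endomorphisms agreeing on all simple submodules agree. -/
theorem eq_of_eq_on_simples [IsSemisimpleModule A M] {g h : M →ₗ[A] M}
    (hw : ∀ W : Submodule A M, IsSimpleModule A W → ∀ x ∈ W, g x = h x) : g = h := by
  have htop : (⊤ : Submodule A M) ≤ LinearMap.eqLocus g h := by
    rw [← IsSemisimpleModule.sSup_simples_eq_top A M]
    exact sSup_le fun W hW x hx => hw W hW x hx
  ext x
  exact htop Submodule.mem_top

/-- A map into a simple submodule kills a nonisomorphic simple submodule. -/
theorem vanish_of_not_iso {W W' : Submodule A M} (hW : IsSimpleModule A W)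
    (hW' : IsSimpleModule A W') (g : M →ₗ[A] M) (hrange : ∀ x, g x ∈ W')
    (hni : ¬ Nonempty (W ≃ₗ[A] W')) : ∀ x ∈ W, g x = 0 := by
  let h : W →ₗ[A] W' := LinearMap.codRestrict W' (g ∘ₗ W.subtype) fun x => hrange _
  rcases LinearMap.bijective_or_eq_zero h with hb | hz
  · exact absurd ⟨LinearEquiv.ofBijective h hb⟩ hni
  · intro x hx
    have := congrArg Subtype.val (LinearMap.congr_fun hz ⟨x, hx⟩)
    simpa [h] using this

/-- Existence of the isotypic projection. -/
theorem exists_isotypic_proj [FiniteDimensional k M] [IsSemisimpleModule A M]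
    (S : Submodule A M) (hS : IsSimpleModule A S) :
    ∃ f : M →ₗ[A] M,
      (∀ (W : Submodule A M), IsSimpleModule A W → Nonempty (W ≃ₗ[A] S) →
        ∀ x ∈ W, f x = x) ∧
      (∀ (W : Submodule A M), IsSimpleModule A W → ¬ Nonempty (W ≃ₗ[A] S) →
        ∀ x ∈ W, f x = 0) := by
  classical
  obtain ⟨s, hindep, hsup, hsimple⟩ :=
    IsSemisimpleModule.exists_sSupIndep_sSup_simples_eq_top A M
  haveI : IsNoetherian A M := isNoetherian_of_tower k inferInstance
  have hfin : s.Finite := WellFoundedGT.finite_of_sSupIndep hindep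
  haveI := hfin.fintype
  set p : s → Submodule A M := fun i => (i : Submodule A M) with hp
  have hint : DirectSum.IsInternal p := by
    refine DirectSum.isInternal_submodule_of_iSupIndep_of_iSup_eq_top ?_ ?_
    · exact (sSupIndep_iff s).mp hindep
    · rw [← sSup_eq_iSup']; exact hsup
  let e : (⨁ (i : s), ↥(p i)) ≃ₗ[A] M :=
    LinearEquiv.ofBijective (DirectSum.coeLinearMap p) hint
  let π : s → (M →ₗ[A] M) := fun i =>
    (p i).subtype ∘ₗ (DirectSum.component A s (fun i => ↥(p i)) i) ∘ₗ (e.symm : M →ₗ[A] _)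
  have hπ_apply : ∀ (i : s) (x : M), π i x = ((e.symm x) i : M) := fun i x => rfl
  have hπ_mem : ∀ i x, π i x ∈ p i := fun i x => ((e.symm x) i).2
  have hπ_same : ∀ (i : s) (x : M), x ∈ p i → π i x = x := by
    intro i x hx
    rw [hπ_apply, hint.ofBijective_coeLinearMap_of_mem hx]
  have hsum : ∀ x : M, ∑ i, π i x = x := by
    intro x
    have hy : ∀ y : (⨁ (i : s), ↥(p i)), (DirectSum.coeLinearMap p) y = ∑ i, ((y i : M)) := by
      intro y
      conv_lhs => rw [← DirectSum.sum_univ_of y]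
      rw [map_sum]
      exact Finset.sum_congr rfl fun i _ => DirectSum.coeLinearMap_of p i (y i)
    calc ∑ i, π i x = ∑ i, ((e.symm x) i : M) := rfl
    _ = (DirectSum.coeLinearMap p) (e.symm x) := (hy _).symm
    _ = x := e.apply_symm_apply x
  -- the isotypic projection
  let c : s → Prop := fun i => Nonempty (↥(p i) ≃ₗ[A] ↥S)
  let f : M →ₗ[A] M := ∑ i ∈ Finset.univ.filter c, π i
  have hsimple' : ∀ i : s, IsSimpleModule A (p i) := fun i => hsimple i i.2
  refine ⟨f, ?_, ?_⟩
  · intro W hW hne x hx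
    obtain ⟨eWS⟩ := hne
    have hvan : ∀ i : s, ¬ c i → π i x = 0 := by
      intro i hci
      refine vanish_of_not_iso hW (hsimple' i) (π i) (hπ_mem i) ?_ x hx
      exact fun ⟨eWp⟩ => hci ⟨eWp.symm.trans eWS⟩
    have hfx : f x = ∑ i, π i x := by
      simp only [f, LinearMap.sum_apply]
      refine Finset.sum_subset (Finset.subset_univ _) fun i _ hi => ?_
      exact hvan i (by simpa using hi)
    rw [hfx, hsum]
  · intro W hW hni x hx
    have hvan : ∀ i : s, c i → π i x = 0 := by
      intro i hci
      obtain ⟨epi⟩ := hci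
      refine vanish_of_not_iso hW (hsimple' i) (π i) (hπ_mem i) ?_ x hx
      exact fun ⟨eWp⟩ => hni ⟨eWp.trans epi⟩
    simp only [f, LinearMap.sum_apply]
    exact Finset.sum_eq_zero fun i hi => hvan i (by simpa using hi)

/-- The isotypic projection commutes with all `A`-endomorphisms. -/
theorem isotypic_comm [IsSemisimpleModule A M]
    (S : Submodule A M) (f : M →ₗ[A] M)
    (h1 : ∀ (W : Submodule A M), IsSimpleModule A W → Nonempty (W ≃ₗ[A] S) →
        ∀ x ∈ W, f x = x)
    (h2 : ∀ (W : Submodule A M), IsSimpleModule A W → ¬ Nonempty (W ≃ₗ[A] S) →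
        ∀ x ∈ W, f x = 0)
    (φ : M →ₗ[A] M) : f ∘ₗ φ = φ ∘ₗ f := by
  refine eq_of_eq_on_simples fun W hW x hx => ?_
  haveI : IsSimpleModule A W := hW
  rcases LinearMap.injective_or_eq_zero (φ ∘ₗ W.subtype) with hinj | hzero
  · have hrange : LinearMap.range (φ ∘ₗ W.subtype) = W.map φ := by
      rw [LinearMap.range_comp, Submodule.range_subtype]
    have eWmap : W ≃ₗ[A] ↥(W.map φ) :=
      (LinearEquiv.ofInjective (φ ∘ₗ W.subtype) hinj).trans (LinearEquiv.ofEq _ _ hrange)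
    have hWmap : IsSimpleModule A ↥(W.map φ) := IsSimpleModule.congr eWmap.symm
    by_cases hc : Nonempty (W ≃ₗ[A] S)
    · have hfx : f x = x := h1 W hW hc x hx
      have hfphi : f (φ x) = φ x := by
        refine h1 (W.map φ) hWmap ?_ (φ x) (Submodule.mem_map_of_mem hx)
        exact ⟨eWmap.symm.trans hc.some⟩
      simp [LinearMap.comp_apply, hfphi, hfx]
    · have hfx : f x = 0 := h2 W hW hc x hx
      have hfphi : f (φ x) = 0 := by
        refine h2 (W.map φ) hWmap ?_ (φ x) (Submodule.mem_map_of_mem hx)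
        exact fun ⟨eMS⟩ => hc ⟨eWmap.trans eMS⟩
      simp [LinearMap.comp_apply, hfphi, hfx]
  · have hφx : φ x = 0 := by
      have := LinearMap.congr_fun hzero ⟨x, hx⟩
      simpa using this
    by_cases hc : Nonempty (W ≃ₗ[A] S)
    · have hfx : f x = x := h1 W hW hc x hx
      simp [LinearMap.comp_apply, hφx, hfx]
    · have hfx : f x = 0 := h2 W hW hc x hx
      simp [LinearMap.comp_apply, hφx, hfx]

/-- Jacobson-density-style lemma. -/
theorem exists_smul_eq_of_comm [FiniteDimensional k M] [IsSemisimpleModule A M]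
    (f : M →ₗ[A] M) (hf : ∀ φ : M →ₗ[A] M, f ∘ₗ φ = φ ∘ₗ f) :
    ∃ a : A, ∀ x : M, a • x = f x := by
  classical
  let B := Module.finBasis k M
  set m := finrank k M with hm
  haveI : IsSemisimpleModule A (Fin m → M) := isSemisimple_pi
  let v : Fin m → M := fun i => B i
  let D : Submodule A (Fin m → M) := Submodule.span A {v}
  obtain ⟨D', hc⟩ := exists_isCompl D
  let π : (Fin m → M) →ₗ[A] (Fin m → M) := D.subtype ∘ₗ D.projectionOnto D' hc
  have hπ_mem : ∀ x, π x ∈ D := fun x => (D.projectionOnto D' hc x).2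
  have hv_mem : v ∈ D := Submodule.mem_span_singleton_self v
  have hπv : π v = v := by
    simp only [π, LinearMap.comp_apply]
    rw [show v = ((⟨v, hv_mem⟩ : D) : Fin m → M) from rfl,
      Submodule.projectionOnto_apply_left hc]
    rfl
  let F : (Fin m → M) →ₗ[k] (Fin m → M) :=
    LinearMap.pi fun i => (f.restrictScalars k) ∘ₗ LinearMap.proj i
  have hexp : ∀ y : Fin m → M, y = ∑ j, LinearMap.single A (fun _ : Fin m => M) j (y j) := by
    intro y
    simpa using (Finset.univ_sum_single y).symm
  have hFsingle : ∀ (j : Fin m) (u : M),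
      F (LinearMap.single A (fun _ : Fin m => M) j u) =
        LinearMap.single A (fun _ : Fin m => M) j (f u) := by
    intro j u
    funext i
    by_cases hij : j = i
    · subst hij; simp [F]
    · simp [F, LinearMap.single_apply, Pi.single_eq_of_ne (Ne.symm hij)]
  have hFπ : ∀ x, F (π x) = π (F x) := by
    intro x
    have key : ∀ (j : Fin m) (u : M),
        F (π (LinearMap.single A (fun _ : Fin m => M) j u)) =
        π (LinearMap.single A (fun _ : Fin m => M) j (f u)) := by
      intro j u
      funext i
      have hcomm := hf ((LinearMap.proj i) ∘ₗ π ∘ₗ (LinearMap.single A (fun _ : Fin m => M) j))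
      have := LinearMap.congr_fun hcomm u
      simpa [F, LinearMap.comp_apply] using this
    calc F (π x) = F (π (∑ j, LinearMap.single A (fun _ : Fin m => M) j (x j))) := by
          rw [← hexp x]
      _ = ∑ j, F (π (LinearMap.single A (fun _ : Fin m => M) j (x j))) := by
          rw [map_sum, map_sum]
      _ = ∑ j, π (LinearMap.single A (fun _ : Fin m => M) j (f (x j))) :=
          Finset.sum_congr rfl fun j _ => key j (x j)
      _ = π (∑ j, LinearMap.single A (fun _ : Fin m => M) j (f (x j))) := by
          rw [map_sum]
      _ = π (F x) := by
          congr 1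
          conv_rhs => rw [hexp (F x)]
          exact Finset.sum_congr rfl fun j _ => rfl
  have hFv : F v ∈ D := by
    have h1 : F v = π (F v) := by
      conv_lhs => rw [← hπv]
      exact hFπ v
    rw [h1]; exact hπ_mem _
  obtain ⟨a, ha⟩ := Submodule.mem_span_singleton.mp hFv
  refine ⟨a, ?_⟩
  have hBa : actL k (M := M) a = f.restrictScalars k := by
    refine B.ext fun i => ?_
    have := congrFun ha i
    simpa [F, v] using this
  intro x
  exact LinearMap.congr_fun hBa x


/-- If traces agree, any simple submodule of `M` has an isomorphic copy in `N`. -/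
theorem exists_simple_iso [CharZero k] [FiniteDimensional k M] [FiniteDimensional k N]
    [IsSemisimpleModule A M] [IsSemisimpleModule A N]
    (htr : ∀ a : A, chi k (A := A) M a = chi k N a)
    (S : Submodule A M) (hS : IsSimpleModule A S) :
    ∃ T : Submodule A N, IsSimpleModule A T ∧ Nonempty (↥S ≃ₗ[A] ↥T) := by
  by_contra hcon
  push_neg at hcon
  haveI : IsSemisimpleModule A (M × N) := isSemisimple_prod
  set S' : Submodule A (M × N) := S.map (inl A M N) with hS'def
  have eS : ↥S ≃ₗ[A] ↥S' := Submodule.equivMapOfInjective _ LinearMap.inl_injective S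
  haveI hS'simple : IsSimpleModule A ↥S' := IsSimpleModule.congr eS.symm
  obtain ⟨f, h1, h2⟩ := exists_isotypic_proj (k := k) S' hS'simple
  obtain ⟨a, ha⟩ := exists_smul_eq_of_comm (k := k) f (isotypic_comm S' f h1 h2)
  have hN0 : ∀ y : N, a • y = 0 := by
    intro y
    have ha' : a • ((0 : M), y) = f (0, y) := ha _
    have hker : ∀ T : Submodule A N, IsSimpleModule A T → T ≤ ker (f ∘ₗ inr A M N) := by
      intro T hT x hx
      rw [mem_ker, comp_apply]
      have eT : ↥T ≃ₗ[A] ↥(T.map (inr A M N)) :=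
        Submodule.equivMapOfInjective _ LinearMap.inr_injective T
      haveI : IsSimpleModule A ↥(T.map (inr A M N)) := IsSimpleModule.congr eT.symm
      refine h2 _ this ?_ _ (Submodule.mem_map_of_mem hx)
      rintro ⟨eTS⟩
      exact (hcon T hT).false ((eS.trans eTS.symm).trans eT.symm)
    have htop : (⊤ : Submodule A N) ≤ ker (f ∘ₗ inr A M N) := by
      rw [← IsSemisimpleModule.sSup_simples_eq_top A N]
      exact sSup_le fun T hT => hker T hT
    have h0 : f (0, y) = 0 := htop (Submodule.mem_top (x := y))
    have : ((a • (0 : M), a • y) : M × N) = 0 := by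
      rw [show ((a • (0:M), a • y) : M × N) = a • ((0:M), y) from rfl, ha', h0]
    exact congrArg Prod.snd this
  have hfS' : ∀ z ∈ S', f z = z := h1 S' hS'simple ⟨LinearEquiv.refl A ↥S'⟩
  have hSid : ∀ x ∈ S, a • x = x := by
    intro x hx
    have hmem : ((x, (0:N)) : M × N) ∈ S' := ⟨x, hx, rfl⟩
    have : a • ((x : M), (0:N)) = (x, (0:N)) := (ha _).trans (hfS' _ hmem)
    exact congrArg Prod.fst this
  have hff : f ∘ₗ f = f := by
    refine eq_of_eq_on_simples fun W hW y hy => ?_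
    by_cases hc : Nonempty (W ≃ₗ[A] ↥S')
    · rw [comp_apply, h1 W hW hc y hy, h1 W hW hc y hy]
    · rw [comp_apply, h2 W hW hc y hy, map_zero]
  have hMidem : ∀ x : M, a • (a • x) = a • x := by
    intro x
    have : a • (a • ((x:M), (0:N))) = a • ((x:M), (0:N)) := by
      rw [ha, ha]
      exact LinearMap.congr_fun hff (x, 0)
    have h' : ((a • (a • x), a • (a • (0:N))) : M × N) = (a • x, a • (0:N)) := this
    exact congrArg Prod.fst h'
  set φM : M →ₗ[k] M := actL k a with hφM
  have hproj : IsProj (range φM) φM := by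
    refine ⟨fun x => mem_range_self _ _, fun x hx => ?_⟩
    obtain ⟨y, rfl⟩ := hx
    exact hMidem y
  have htrM : chi k M a = (finrank k ↥(range φM) : k) := hproj.trace
  have htrN : chi k N a = 0 := by
    have hz : actL k (M := N) a = 0 := LinearMap.ext fun y => hN0 y
    rw [chi, hz, map_zero]
  haveI := hS.nontrivial
  obtain ⟨⟨x0, hx0⟩, hx0ne⟩ := exists_ne (0 : ↥S)
  have hx0ne' : x0 ≠ 0 := fun h => hx0ne (Subtype.ext h)
  have hx0mem : x0 ∈ range φM := ⟨x0, hSid x0 hx0⟩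
  have hrank0 : finrank k ↥(range φM) = 0 := by
    have := (htr a).trans htrN
    rw [htrM] at this
    exact_mod_cast this
  rw [Submodule.finrank_eq_zero] at hrank0
  rw [hrank0] at hx0mem
  exact hx0ne' hx0mem

theorem equiv_of_subsingleton {M N : Type w} [AddCommGroup M] [AddCommGroup N]
    [Module A M] [Module A N] [Subsingleton M] [Subsingleton N] :
    Nonempty (M ≃ₗ[A] N) := by
  refine ⟨LinearEquiv.ofLinear (0 : M →ₗ[A] N) (0 : N →ₗ[A] M) ?_ ?_⟩ <;>
    (ext x; exact Subsingleton.elim _ _)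

/-- Brauer–Nesbitt, abstract module form. -/
theorem nonempty_linearEquiv_of_chi_eq_aux [CharZero k] :
    ∀ (d : ℕ) (M N : Type w) [AddCommGroup M] [AddCommGroup N] [Module k M] [Module k N]
      [Module A M] [Module A N] [IsScalarTower k A M] [IsScalarTower k A N]
      [FiniteDimensional k M] [FiniteDimensional k N]
      [IsSemisimpleModule A M] [IsSemisimpleModule A N],
      finrank k M ≤ d → (∀ a : A, chi k (A := A) M a = chi k N a) →
      Nonempty (M ≃ₗ[A] N) := by
  intro d
  induction d with
  | zero =>
    intro M N iM iN iM2 iN2 iM3 iN3 iM4 iN4 iM5 iN5 iM6 iN6 hd htr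
    have hrk : finrank k M = finrank k N := by
      have := htr 1
      rw [chi_one, chi_one] at this
      exact_mod_cast this
    have hM0 : finrank k M = 0 := Nat.le_zero.mp hd
    haveI : Subsingleton M := (Module.finrank_zero_iff (R := k)).mp hM0
    haveI : Subsingleton N := (Module.finrank_zero_iff (R := k)).mp (hrk ▸ hM0)
    exact equiv_of_subsingleton
  | succ d IH =>
    intro M N iM iN iM2 iN2 iM3 iN3 iM4 iN4 iM5 iN5 iM6 iN6 hd htr
    have hrk : finrank k M = finrank k N := by
      have := htr 1
      rw [chi_one, chi_one] at this
      exact_mod_cast this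
    by_cases h0 : finrank k M = 0
    · haveI : Subsingleton M := (Module.finrank_zero_iff (R := k)).mp h0
      haveI : Subsingleton N := (Module.finrank_zero_iff (R := k)).mp (hrk ▸ h0)
      exact equiv_of_subsingleton
    · haveI : Nontrivial M := Module.finrank_pos_iff.mp (Nat.pos_of_ne_zero h0)
      obtain ⟨S, hS⟩ := IsSemisimpleModule.exists_simple_submodule A M
      obtain ⟨T, hT, ⟨eST⟩⟩ := exists_simple_iso htr S hS
      obtain ⟨S₂, hS₂⟩ := exists_isCompl S
      obtain ⟨T₂, hT₂⟩ := exists_isCompl T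
      let eM : (↥S × ↥S₂) ≃ₗ[A] M := Submodule.prodEquivOfIsCompl S S₂ hS₂
      let eN : (↥T × ↥T₂) ≃ₗ[A] N := Submodule.prodEquivOfIsCompl T T₂ hT₂
      have hchiM : ∀ a : A, chi k M a = chi k ↥S a + chi k ↥S₂ a := by
        intro a
        rw [← chi_congr eM a, chi_prod]
      have hchiN : ∀ a : A, chi k N a = chi k ↥T a + chi k ↥T₂ a := by
        intro a
        rw [← chi_congr eN a, chi_prod]
      have htr2 : ∀ a : A, chi k (A := A) ↥S₂ a = chi k ↥T₂ a := by
        intro a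
        have hST := chi_congr (k := k) eST a
        have key : chi k (A := A) ↥T a + chi k ↥S₂ a = chi k ↥T a + chi k ↥T₂ a := by
          calc chi k (A := A) ↥T a + chi k ↥S₂ a
              = chi k (A := A) ↥S a + chi k ↥S₂ a := by rw [hST]
            _ = chi k M a := (hchiM a).symm
            _ = chi k N a := htr a
            _ = chi k (A := A) ↥T a + chi k ↥T₂ a := hchiN a
        exact add_left_cancel key
      have hrkM : finrank k M = finrank k ↥S + finrank k ↥S₂ := by
        rw [← LinearEquiv.finrank_eq (eM.restrictScalars k)]
        exact Module.finrank_prod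
      haveI := hS.nontrivial
      have hSpos : 0 < finrank k ↥S := finrank_pos
      have hrkS2 : finrank k ↥S₂ ≤ d := by omega
      obtain ⟨e2⟩ := IH ↥S₂ ↥T₂ hrkS2 htr2
      exact ⟨eM.symm.trans ((eST.prodCongr e2).trans eN)⟩

end Abstract

section Glue

variable {k G V : Type*} [CommSemiring k] [Monoid G] [AddCommMonoid V] [Module k V]

noncomputable instance asModuleTower (ρ : Representation k G V) :
    IsScalarTower k (MonoidAlgebra k G) ρ.asModule := by
  constructor
  intro c r x
  show ((c • r) • x : ρ.asModule) = c • (r • x)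
  apply ρ.asModuleEquiv.injective
  rw [ρ.asModuleEquiv_map_smul]
  have h2 : ρ.asModuleEquiv (c • (r • x) : ρ.asModule) = c • ρ.asModuleEquiv (r • x) := rfl
  rw [h2, ρ.asModuleEquiv_map_smul, map_smul]
  rfl

theorem actL_asModule (ρ : Representation k G V) (a : MonoidAlgebra k G) (x : ρ.asModule) :
    (a • x : ρ.asModule) = ρ.asAlgebraHom a (ρ.asModuleEquiv x) :=
  ρ.asModuleEquiv_map_smul a x

theorem rep_smul_of (ρ : Representation k G V) (γ : G) (x : ρ.asModule) :
    (MonoidAlgebra.of k G γ) • x = ρ γ (ρ.asModuleEquiv x) := by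
  rw [actL_asModule, Representation.asAlgebraHom_of]

end Glue

/-- The representation of `Γ` on `Fin n → Ω` associated to a homomorphism `Γ →* GLₙ(Ω)`. -/
noncomputable def glRep {Ω : Type*} [CommRing Ω] {Γ : Type*} [Group Γ] {n : ℕ}
    (ρ : Γ →* GL (Fin n) Ω) : Representation Ω Γ (Fin n → Ω) :=
  (Matrix.toLinAlgEquiv' :
        Matrix (Fin n) (Fin n) Ω ≃ₐ[Ω] ((Fin n → Ω) →ₗ[Ω] (Fin n → Ω))).toAlgHom.toRingHom.toMonoidHom.comp
    ((Units.coeHom (Matrix (Fin n) (Fin n) Ω)).comp ρ)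

section Stmt

variable {Γ : Type*} [Group Γ] {Ω : Type*} [Field Ω] [CharZero Ω] {n : ℕ}

theorem glRep_apply (ρ : Γ →* GL (Fin n) Ω) (γ : Γ) :
    glRep ρ γ = Matrix.toLinAlgEquiv' (ρ γ : Matrix (Fin n) (Fin n) Ω) := rfl

theorem toMatrix'_glRep (ρ : Γ →* GL (Fin n) Ω) (γ : Γ) :
    LinearMap.toMatrix' (glRep ρ γ) = (ρ γ : Matrix (Fin n) (Fin n) Ω) := by
  rw [glRep_apply]
  exact LinearMap.toMatrix'_toLin' _

theorem trace_glRep (ρ : Γ →* GL (Fin n) Ω) (γ : Γ) :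
    LinearMap.trace Ω (Fin n → Ω) (glRep ρ γ) = Matrix.trace (ρ γ : Matrix (Fin n) (Fin n) Ω) := by
  rw [LinearMap.trace_eq_matrix_trace Ω (Pi.basisFun Ω (Fin n)),
    LinearMap.toMatrix_eq_toMatrix', toMatrix'_glRep]

theorem chi_glRep (ρ : Γ →* GL (Fin n) Ω) (a : MonoidAlgebra Ω Γ) :
    chi Ω ((glRep ρ).asModule) a =
      LinearMap.trace Ω (Fin n → Ω) ((glRep ρ).asAlgebraHom a) := by
  have : actL Ω (M := (glRep ρ).asModule) a
      = ((glRep ρ).asAlgebraHom a : (Fin n → Ω) →ₗ[Ω] (Fin n → Ω)) := by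
    ext x
    exact actL_asModule (glRep ρ) a x
  rw [chi, this]
  rfl

end Stmt

/-- Two semisimple representations `ρ, ρ' : Γ → GLₙ(Ω)` over an algebraically
closed field of characteristic zero with equal traces are conjugate in `GLₙ(Ω)`. -/
theorem stmt1 {Γ : Type*} [Group Γ] {Ω : Type*} [Field Ω] [IsAlgClosed Ω] [CharZero Ω]
    {n : ℕ} (ρ ρ' : Γ →* GL (Fin n) Ω)
    (hss : IsSemisimpleModule (MonoidAlgebra Ω Γ) (glRep ρ).asModule)
    (hss' : IsSemisimpleModule (MonoidAlgebra Ω Γ) (glRep ρ').asModule)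
    (htr : ∀ γ : Γ,
      Matrix.trace (ρ γ : Matrix (Fin n) (Fin n) Ω) =
        Matrix.trace (ρ' γ : Matrix (Fin n) (Fin n) Ω)) :
    ∃ g : GL (Fin n) Ω, ∀ γ : Γ, ρ' γ = g * ρ γ * g⁻¹ := by
  classical
  set A := MonoidAlgebra Ω Γ with hA
  haveI : FiniteDimensional Ω ((glRep ρ).asModule) :=
    inferInstanceAs (FiniteDimensional Ω (Fin n → Ω))
  haveI : FiniteDimensional Ω ((glRep ρ').asModule) :=
    inferInstanceAs (FiniteDimensional Ω (Fin n → Ω))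
  -- trace equality for all elements of the monoid algebra
  have htrA : ∀ a : A, chi Ω (A := A) ((glRep ρ).asModule) a = chi Ω ((glRep ρ').asModule) a := by
    intro a
    rw [chi_glRep, chi_glRep]
    induction a using MonoidAlgebra.induction_on with
    | of γ =>
      rw [Representation.asAlgebraHom_of, Representation.asAlgebraHom_of,
        trace_glRep, trace_glRep]
      exact htr γ
    | add f g hf hg => rw [map_add, map_add, map_add, map_add, hf, hg]
    | smul r f hf => rw [map_smul, map_smul, map_smul, map_smul, hf]
  obtain ⟨e⟩ := nonempty_linearEquiv_of_chi_eq_aux (k := Ω) (A := A)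
    (finrank Ω ((glRep ρ).asModule)) ((glRep ρ).asModule) ((glRep ρ').asModule) le_rfl htrA
  -- build the Ω-linear equivalence
  have hsmulΩ : ∀ (c : Ω) (x : (glRep ρ).asModule), e (c • x) = c • e x := by
    intro c x
    rw [← algebraMap_smul A c x, map_smul, algebraMap_smul]
  have hsmulΩ' : ∀ (c : Ω) (x : (glRep ρ').asModule), e.symm (c • x) = c • e.symm x := by
    intro c x
    rw [← algebraMap_smul A c x, map_smul, algebraMap_smul]
  let E : (Fin n → Ω) →ₗ[Ω] (Fin n → Ω) :=
    { toFun := fun v => e (v : (glRep ρ).asModule)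
      map_add' := fun x y => map_add e x y
      map_smul' := fun c x => hsmulΩ c x }
  let E' : (Fin n → Ω) →ₗ[Ω] (Fin n → Ω) :=
    { toFun := fun v => e.symm (v : (glRep ρ').asModule)
      map_add' := fun x y => map_add e.symm x y
      map_smul' := fun c x => hsmulΩ' c x }
  have hEE' : E ∘ₗ E' = LinearMap.id := by
    refine LinearMap.ext fun x => ?_
    exact e.apply_symm_apply x
  have hE'E : E' ∘ₗ E = LinearMap.id := by
    refine LinearMap.ext fun x => ?_
    exact e.symm_apply_apply x
  let g : GL (Fin n) Ω :=
    { val := LinearMap.toMatrix' E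
      inv := LinearMap.toMatrix' E'
      val_inv := by rw [← LinearMap.toMatrix'_comp, hEE', LinearMap.toMatrix'_id]
      inv_val := by rw [← LinearMap.toMatrix'_comp, hE'E, LinearMap.toMatrix'_id] }
  refine ⟨g, fun γ => ?_⟩
  -- intertwining relation
  have hint : E ∘ₗ (glRep ρ γ) = (glRep ρ' γ) ∘ₗ E := by
    refine LinearMap.ext fun v => ?_
    show e ((glRep ρ γ) v) = (glRep ρ' γ) (e v)
    have step1 := congrArg e (rep_smul_of (glRep ρ) γ (show (glRep ρ).asModule from v)).symm
    have step2 := map_smul e (MonoidAlgebra.of Ω Γ γ) (show (glRep ρ).asModule from v)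
    have step3 := rep_smul_of (glRep ρ') γ (e (show (glRep ρ).asModule from v))
    exact step1.trans (step2.trans step3)
  have hmat : LinearMap.toMatrix' E * (ρ γ : Matrix (Fin n) (Fin n) Ω)
      = (ρ' γ : Matrix (Fin n) (Fin n) Ω) * LinearMap.toMatrix' E := by
    have := congrArg LinearMap.toMatrix' hint
    rwa [LinearMap.toMatrix'_comp, LinearMap.toMatrix'_comp, toMatrix'_glRep,
      toMatrix'_glRep] at this
  apply Units.ext
  show (ρ' γ : Matrix (Fin n) (Fin n) Ω)
      = (g : Matrix (Fin n) (Fin n) Ω) * (ρ γ : Matrix (Fin n) (Fin n) Ω) * ((g⁻¹ : GL (Fin n) Ω) : Matrix (Fin n) (Fin n) Ω)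
  have hginv : ((g⁻¹ : GL (Fin n) Ω) : Matrix (Fin n) (Fin n) Ω) = LinearMap.toMatrix' E' := rfl
  have hgval : (g : Matrix (Fin n) (Fin n) Ω) = LinearMap.toMatrix' E := rfl
  rw [hginv, hgval, hmat]
  rw [mul_assoc]
  rw [show LinearMap.toMatrix' E * LinearMap.toMatrix' E' = 1 from by
    rw [← LinearMap.toMatrix'_comp, hEE', LinearMap.toMatrix'_id]]
  rw [mul_one]
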